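/- Assume the conditional expectation of X given Y is linear: E[X − μ_X | σ(Y)] = Σ_XY σ_Y^{-2} (Y − μ_Y) almost surely. Then the conditional prediction bias satisfies E[Ŷ^OLS − Y | σ(Y)] = (η_OLS − 1)(Y − μ_Y) almost surely. In particular, if η_OLS < 1, then E[Ŷ^OLS − Y | σ(Y)] < 0 almost surely on the event {Y > μ_Y} and E[Ŷ^OLS − Y | σ(Y)] > 0 almost surely on the event {Y < μ_Y}. -/

import Mathlib

open MeasureTheory ProbabilityTheory Matrix

/-- Population covariance of two real random variables. -/
noncomputable def covar {Ω : Type*} {mΩ : MeasurableSpace Ω} (μ : Measure Ω) (f g : Ω → ℝ) : ℝ :=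
  ∫ ω, (f ω - ∫ ω', f ω' ∂μ) * (g ω - ∫ ω', g ω' ∂μ) ∂μ

/-- Under linearity of `E[X − μ_X | σ(Y)]`, the conditional prediction bias
satisfies `E[Ŷ^OLS − Y | σ(Y)] = (η_OLS − 1)(Y − μ_Y)` a.s.; in particular if `η_OLS < 1`
it is negative a.s. on `{Y > μ_Y}` and positive a.s. on `{Y < μ_Y}`. -/
theorem ols_conditional_prediction_bias
    {p : ℕ} {Ω : Type*} [MeasurableSpace Ω] (μ : Measure Ω) [IsProbabilityMeasure μ]
    (X : Ω → Fin p → ℝ) (Y : Ω → ℝ)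
    (hXL2 : ∀ i, MemLp (fun ω => X ω i) 2 μ) (hYL2 : MemLp Y 2 μ)
    (hYmeas : Measurable Y)
    (μX : Fin p → ℝ) (hμX : ∀ i, μX i = ∫ ω, X ω i ∂μ)
    (μY : ℝ) (hμY : μY = ∫ ω, Y ω ∂μ)
    (SXX : Matrix (Fin p) (Fin p) ℝ)
    (hSXX : ∀ i j, SXX i j = covar μ (fun ω => X ω i) (fun ω => X ω j))
    (hXXinv : IsUnit SXX.det)
    (SXY : Fin p → ℝ) (hSXY : ∀ i, SXY i = covar μ (fun ω => X ω i) Y)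
    (σY2 : ℝ) (hσY2 : σY2 = variance Y μ) (hσY2pos : 0 < σY2)
    (βOLS : Fin p → ℝ) (hβ : βOLS = SXX⁻¹ *ᵥ SXY)
    (Yhat : Ω → ℝ) (hYhat : ∀ ω, Yhat ω = μY + ∑ i, (X ω i - μX i) * βOLS i)
    (η : ℝ) (hη : η = (SXY ⬝ᵥ (SXX⁻¹ *ᵥ SXY)) / σY2)
    (mY : MeasurableSpace Ω) (hmY : mY = MeasurableSpace.comap Y inferInstance)
    (hlin : ∀ i, μ[(fun ω => X ω i - μX i) | mY]
        =ᵐ[μ] fun ω => SXY i / σY2 * (Y ω - μY)) :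
    (μ[(fun ω => Yhat ω - Y ω) | mY] =ᵐ[μ] fun ω => (η - 1) * (Y ω - μY)) ∧
    (η < 1 →
      ∀ᵐ ω ∂μ,
        (μY < Y ω → (μ[(fun ω' => Yhat ω' - Y ω') | mY]) ω < 0) ∧
        (Y ω < μY → 0 < (μ[(fun ω' => Yhat ω' - Y ω') | mY]) ω)) := by
  subst hmY
  have hm : MeasurableSpace.comap Y inferInstance ≤ ‹MeasurableSpace Ω› := hYmeas.comap_le
  have hXi : ∀ i, Integrable (fun ω => X ω i - μX i) μ := fun i =>
    ((hXL2 i).integrable (by norm_num)).sub (integrable_const _)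
  have hYint : Integrable (fun ω => Y ω - μY) μ :=
    (hYL2.integrable (by norm_num)).sub (integrable_const _)
  have hYsm : StronglyMeasurable[MeasurableSpace.comap Y inferInstance] (fun ω => Y ω - μY) := by
    have hYm : Measurable[MeasurableSpace.comap Y inferInstance] Y :=
      fun s hs => ⟨s, hs, rfl⟩
    exact (hYm.stronglyMeasurable.sub stronglyMeasurable_const)
  -- rewrite Yhat - Y
  have hfun : (fun ω => Yhat ω - Y ω)
      = (fun ω => ∑ i, βOLS i • (X ω i - μX i)) - (fun ω => Y ω - μY) := by
    funext ω
    simp only [hYhat, Pi.sub_apply, smul_eq_mul]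
    rw [Finset.sum_congr rfl (fun i _ => mul_comm (X ω i - μX i) (βOLS i))]
    ring
  have hsumint : Integrable (fun ω => ∑ i, βOLS i • (X ω i - μX i)) μ := by
    apply integrable_finset_sum
    intro i _
    exact (hXi i).smul (βOLS i)
  have key : μ[(fun ω => Yhat ω - Y ω) | (MeasurableSpace.comap Y inferInstance)]
      =ᵐ[μ] fun ω => (η - 1) * (Y ω - μY) := by
    rw [hfun]
    have he : (fun ω => ∑ i, βOLS i • (X ω i - μX i))
        = ∑ i : Fin p, (fun ω => βOLS i • (X ω i - μX i)) := by
      funext ω; simp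
    refine (condExp_sub hsumint hYint _).trans ?_
    have h1 : μ[(fun ω => ∑ i, βOLS i • (X ω i - μX i)) | (MeasurableSpace.comap Y inferInstance)]
        =ᵐ[μ] fun ω => ∑ i, βOLS i * (SXY i / σY2 * (Y ω - μY)) := by
      have := condExp_finset_sum (μ := μ) (m := (MeasurableSpace.comap Y inferInstance)) (s := Finset.univ)
        (f := fun i ω => βOLS i • (X ω i - μX i))
        (fun i _ => (hXi i).smul (βOLS i))
      rw [he]
      refine this.trans ?_
      have h2 : ∀ i : Fin p, μ[(fun ω => βOLS i • (X ω i - μX i)) | (MeasurableSpace.comap Y inferInstance)]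
          =ᵐ[μ] fun ω => βOLS i * (SXY i / σY2 * (Y ω - μY)) := by
        intro i
        have := condExp_smul (μ := μ) (m := (MeasurableSpace.comap Y inferInstance)) (βOLS i) (fun ω => X ω i - μX i)
        refine this.trans ?_
        filter_upwards [hlin i] with ω hω
        simp [hω]
      have : ∀ᵐ ω ∂μ, ∀ i : Fin p, (μ[(fun ω => βOLS i • (X ω i - μX i)) | (MeasurableSpace.comap Y inferInstance)]) ω
          = βOLS i * (SXY i / σY2 * (Y ω - μY)) :=
        (ae_all_iff).2 h2
      filter_upwards [this] with ω hω
      simp only [Finset.sum_apply]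
      exact Finset.sum_congr rfl fun i _ => hω i
    have h3 : μ[(fun ω => Y ω - μY) | (MeasurableSpace.comap Y inferInstance)] = fun ω => Y ω - μY :=
      condExp_of_stronglyMeasurable (μ := μ) hm hYsm hYint
    have hsum : ∀ ω, ∑ i, βOLS i * (SXY i / σY2 * (Y ω - μY)) = η * (Y ω - μY) := by
      intro ω
      have : ∑ i, βOLS i * (SXY i / σY2 * (Y ω - μY))
          = (∑ i, SXY i * βOLS i) / σY2 * (Y ω - μY) := by
        rw [Finset.sum_div, Finset.sum_mul]
        exact Finset.sum_congr rfl fun i _ => by ring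
      rw [this, hη, hβ]
      rfl
    filter_upwards [h1] with ω hω
    simp only [Pi.sub_apply, hω, h3, hsum ω]
    ring
  refine ⟨key, fun hηlt => ?_⟩
  filter_upwards [key] with ω hω
  constructor
  · intro h
    rw [hω]
    exact mul_neg_of_neg_of_pos (by linarith) (by linarith)
  · intro h
    rw [hω]
    exact mul_pos_of_neg_of_neg (by linarith) (by linarith)
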